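/- Set B = −D⁻¹ L̃ and c = D⁻¹ r. Then L is invertible, and every chaotic relaxation for (B, c) (for any initial vector x⁰, any admissible shift functions and any admissible update function) converges to the solution L⁻¹ r of the system L x = r. -/
import Mathlib


open Filter Topology

/-- The `(i,j)`-th `b × b` block of a matrix indexed by `Fin N × Fin b`. -/
def blockOf {N b : ℕ} (M : Matrix (Fin N × Fin b) (Fin N × Fin b) ℝ) (i j : Fin N) :
    Matrix (Fin b) (Fin b) ℝ :=
  Matrix.of fun k l => M (i, k) (j, l)

/-- The block diagonal part `D` of a matrix (blocks of size `b × b`). -/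
def blockDiagPart {N b : ℕ} (M : Matrix (Fin N × Fin b) (Fin N × Fin b) ℝ) :
    Matrix (Fin N × Fin b) (Fin N × Fin b) ℝ :=
  Matrix.of fun p q => if p.1 = q.1 then M p q else 0

/-- The strictly lower block triangular part `L̃` of a matrix (blocks of size `b × b`). -/
def strictBlockLowerPart {N b : ℕ} (M : Matrix (Fin N × Fin b) (Fin N × Fin b) ℝ) :
    Matrix (Fin N × Fin b) (Fin N × Fin b) ℝ :=
  Matrix.of fun p q => if q.1 < p.1 then M p q else 0

/-- A chaotic relaxation for the pair `(B, c)` over an arbitrary finite index type. -/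
def IsChaoticRelaxation {ι : Type} [Fintype ι] (B : Matrix ι ι ℝ) (c : ι → ℝ)
    (x : ℕ → ι → ℝ) (s : ι → ℕ → ℕ) (u : ℕ → ι) : Prop :=
  (∀ j : ℕ, 1 ≤ j → ∀ i : ι,
      (i ≠ u j → x (j + 1) i = x j i) ∧
      (i = u j → x (j + 1) i = (∑ α : ι, B i α * x (j - s α j) α) + c i)) ∧
  (∃ shat : ℕ, ∀ (α : ι) (j : ℕ), 1 ≤ j → s α j ≤ min (j - 1) shat) ∧
  (∀ (i : ι) (j : ℕ), 1 ≤ j → ∃ l : ℕ, j < l ∧ u l = i)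

/-- Core convergence lemma: if `B` is strictly lower triangular with respect to a block
function `blk` and `xs` is a fixed point of the iteration, then every component of a
chaotic relaxation is eventually equal to `xs`. -/
lemma chaotic_converges {ι : Type} [Fintype ι] (blk : ι → ℕ) (B : Matrix ι ι ℝ)
    (c xs : ι → ℝ) (hB : ∀ p q : ι, ¬ blk q < blk p → B p q = 0)
    (hfix : ∀ i, xs i = (∑ α : ι, B i α * xs α) + c i)
    (x : ℕ → ι → ℝ) (s : ι → ℕ → ℕ) (u : ℕ → ι)
    (hx : IsChaoticRelaxation B c x s u) :
    ∀ i : ι, ∀ᶠ j in atTop, x j i = xs i := by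
  obtain ⟨hstep, ⟨sh, hsh⟩, hfair⟩ := hx
  suffices H : ∀ k : ℕ, ∀ i : ι, blk i < k → ∀ᶠ j in atTop, x j i = xs i from
    fun i => H (blk i + 1) i (Nat.lt_succ_self _)
  intro k
  induction k with
  | zero => exact fun i hi => absurd hi (Nat.not_lt_zero _)
  | succ k ih =>
    intro i hik
    have hprev : ∀ᶠ j in atTop, ∀ α, blk α < blk i → x j α = xs α := by
      rw [eventually_all]
      intro α
      by_cases hα : blk α < blk i
      · exact (ih α (lt_of_lt_of_le hα (Nat.lt_succ_iff.mp hik))).mono fun j h _ => h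
      · exact Eventually.of_forall fun j h => absurd h hα
    obtain ⟨T, hT⟩ := eventually_atTop.mp hprev
    have upd : ∀ j : ℕ, T + sh + 1 ≤ j → u j = i → x (j + 1) i = xs i := by
      intro j hj hu
      have h1 : 1 ≤ j := by omega
      rw [(hstep j h1 i).2 hu.symm]
      have hterm : ∀ α : ι, B i α * x (j - s α j) α = B i α * xs α := by
        intro α
        by_cases hα : blk α < blk i
        · have hs := hsh α j h1
          have : T ≤ j - s α j := by omega
          rw [hT _ this α hα]
        · simp [hB i α hα]
      rw [Finset.sum_congr rfl fun α _ => hterm α]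
      exact (hfix i).symm
    have pers : ∀ m : ℕ, T + sh + 2 ≤ m → x m i = xs i → ∀ j, m ≤ j → x j i = xs i := by
      intro m hm hxm j hj
      induction j with
      | zero => omega
      | succ j ihj =>
        rcases Nat.lt_or_ge j m with hlt | hge
        · have : m = j + 1 := by omega
          rw [← this]; exact hxm
        · by_cases hu : i = u j
          · exact upd j (by omega) hu.symm
          · rw [(hstep j (by omega) i).1 hu]
            exact ihj hge
    obtain ⟨l, hl, hul⟩ := hfair i (T + sh + 1) (by omega)
    have hx1 : x (l + 1) i = xs i := upd l (by omega) hul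
    exact eventually_atTop.2 ⟨l + 1, pers (l + 1) (by omega) hx1⟩

namespace ChaoticAux

open Matrix OrderDual Finset

variable {N b : ℕ}

/-- The block map into the order dual, so "lower block triangular" is `BlockTriangular`. -/
def bl (N b : ℕ) : Fin N × Fin b → (Fin N)ᵒᵈ := fun p => toDual p.1

lemma det_toSquareBlock (M : Matrix (Fin N × Fin b) (Fin N × Fin b) ℝ) (i : Fin N) :
    (M.toSquareBlock (bl N b) (toDual i)).det = (blockOf M i i).det := by
  let e : Fin b ≃ { p : Fin N × Fin b // bl N b p = toDual i } :=
    { toFun := fun k => ⟨(i, k), rfl⟩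
      invFun := fun p => p.1.2
      left_inv := fun k => rfl
      right_inv := fun p => by
        have h1 : p.1.1 = i := toDual.injective p.2
        exact Subtype.ext (Prod.ext h1.symm rfl) }
  have heq : (M.toSquareBlock (bl N b) (toDual i)).submatrix e e = blockOf M i i := by
    ext k l
    simp [Matrix.toSquareBlock_def, blockOf, e]
  rw [← heq, Matrix.det_submatrix_equiv_self]

lemma isUnit_of_blocks (M : Matrix (Fin N × Fin b) (Fin N × Fin b) ℝ)
    (hM : M.BlockTriangular (bl N b)) (hd : ∀ i : Fin N, IsUnit (blockOf M i i)) :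
    IsUnit M := by
  rw [Matrix.isUnit_iff_isUnit_det, hM.det_fintype, isUnit_iff_ne_zero, Finset.prod_ne_zero_iff]
  intro a _
  have h := det_toSquareBlock M (ofDual a)
  rw [show toDual (ofDual a) = a from rfl] at h
  rw [h]
  have hu : IsUnit (blockOf M (ofDual a) (ofDual a)).det :=
    (Matrix.isUnit_iff_isUnit_det _).1 (hd (ofDual a))
  exact (isUnit_iff_ne_zero.mp hu)

/-- The block map not dualized. -/
def bu (N b : ℕ) : Fin N × Fin b → Fin N := fun p => p.1

lemma blockDiag_bt_bl (M : Matrix (Fin N × Fin b) (Fin N × Fin b) ℝ) :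
    (blockDiagPart M).BlockTriangular (bl N b) := by
  intro p q h
  have : p.1 ≠ q.1 := by
    intro hpq
    rw [show bl N b p = bl N b q from congrArg toDual hpq] at h
    exact lt_irrefl _ h
  simp [blockDiagPart, this]

lemma blockDiag_bt_bu (M : Matrix (Fin N × Fin b) (Fin N × Fin b) ℝ) :
    (blockDiagPart M).BlockTriangular (bu N b) := by
  intro p q h
  have : p.1 ≠ q.1 := fun hpq => by simp [bu, hpq] at h
  simp [blockDiagPart, this]

lemma blockOf_blockDiagPart (M : Matrix (Fin N × Fin b) (Fin N × Fin b) ℝ) (i : Fin N) :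
    blockOf (blockDiagPart M) i i = blockOf M i i := by
  ext k l
  simp [blockOf, blockDiagPart]

lemma inv_blockDiag (M : Matrix (Fin N × Fin b) (Fin N × Fin b) ℝ)
    (hd : ∀ i : Fin N, IsUnit (blockOf M i i)) :
    ∀ p q : Fin N × Fin b, p.1 ≠ q.1 → (blockDiagPart M)⁻¹ p q = 0 := by
  have hU : IsUnit (blockDiagPart M) :=
    isUnit_of_blocks _ (blockDiag_bt_bl M) fun i => (blockOf_blockDiagPart M i).symm ▸ hd i
  letI : Invertible (blockDiagPart M) :=
    Matrix.invertibleOfIsUnitDet _ ((Matrix.isUnit_iff_isUnit_det _).1 hU)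
  have h1 := Matrix.blockTriangular_inv_of_blockTriangular (blockDiag_bt_bl M)
  have h2 := Matrix.blockTriangular_inv_of_blockTriangular (blockDiag_bt_bu M)
  intro p q hpq
  rcases lt_or_gt_of_ne hpq with h | h
  · exact h1 (toDual_lt_toDual.mpr h)
  · exact h2 h

end ChaoticAux

/-- With `B = -D⁻¹ L̃` and `c = D⁻¹ r`, the lower block triangular matrix `L` is
invertible and every chaotic relaxation for `(B, c)` converges to `L⁻¹ r`. -/
theorem chaotic_relaxation_block_triangular_converges
    {N b : ℕ} (hb : 1 ≤ b) (hN : 1 ≤ N)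
    (L : Matrix (Fin N × Fin b) (Fin N × Fin b) ℝ)
    (hlow : ∀ p q : Fin N × Fin b, p.1 < q.1 → L p q = 0)
    (hdiag : ∀ i : Fin N, IsUnit (blockOf L i i))
    (r : (Fin N × Fin b) → ℝ) :
    IsUnit L ∧
    ∀ (x : ℕ → (Fin N × Fin b) → ℝ) (s : (Fin N × Fin b) → ℕ → ℕ)
      (u : ℕ → Fin N × Fin b),
      IsChaoticRelaxation (-((blockDiagPart L)⁻¹ * strictBlockLowerPart L))
        ((blockDiagPart L)⁻¹.mulVec r) x s u →
      Tendsto x atTop (𝓝 (L⁻¹.mulVec r)) := by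
  classical
  have hbtL : L.BlockTriangular (ChaoticAux.bl N b) := fun p q h =>
    hlow p q (OrderDual.toDual_lt_toDual.mp h)
  have hLunit : IsUnit L := ChaoticAux.isUnit_of_blocks L hbtL hdiag
  have hDunit : IsUnit (blockDiagPart L) :=
    ChaoticAux.isUnit_of_blocks _ (ChaoticAux.blockDiag_bt_bl L)
      (fun i => (ChaoticAux.blockOf_blockDiagPart L i).symm ▸ hdiag i)
  refine ⟨hLunit, ?_⟩
  intro x s u hx
  set D := blockDiagPart L with hDdef
  set Lt := strictBlockLowerPart L with hLtdef
  set B := -(D⁻¹ * Lt) with hBdef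
  set c := D⁻¹.mulVec r with hcdef
  set xs := L⁻¹.mulVec r with hxsdef
  have hDinv := ChaoticAux.inv_blockDiag L hdiag
  -- B is strictly block lower triangular
  have hB : ∀ p q : Fin N × Fin b, ¬ ((q.1 : ℕ) < (p.1 : ℕ)) → B p q = 0 := by
    intro p q h
    rw [hBdef]
    simp only [Matrix.neg_apply, Matrix.mul_apply, neg_eq_zero]
    refine Finset.sum_eq_zero fun t _ => ?_
    by_cases ht : p.1 = t.1
    · have hnq : ¬ q.1 < t.1 := by
        rw [← ht]
        intro hc
        exact h (by exact_mod_cast hc)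
      have hz : Lt t q = 0 := by simp [hLtdef, strictBlockLowerPart, hnq]
      rw [hz, mul_zero]
    · rw [hDinv p t ht, zero_mul]
  -- fixed point equation
  have hLdet : IsUnit L.det := (Matrix.isUnit_iff_isUnit_det L).1 hLunit
  have hDdet : IsUnit D.det := (Matrix.isUnit_iff_isUnit_det D).1 hDunit
  have hLxs : L.mulVec xs = r := by
    rw [hxsdef, Matrix.mulVec_mulVec, Matrix.mul_nonsing_inv L hLdet, Matrix.one_mulVec]
  have hsplit : D + Lt = L := by
    ext p q
    simp only [Matrix.add_apply, hDdef, hLtdef, blockDiagPart, strictBlockLowerPart,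
      Matrix.of_apply]
    rcases lt_trichotomy p.1 q.1 with h | h | h
    · rw [if_neg h.ne, if_neg (asymm h), hlow p q h, add_zero]
    · rw [if_pos h, if_neg (by rw [h]; exact lt_irrefl _), add_zero]
    · rw [if_neg h.ne', if_pos h, zero_add]
  have hDxs : D.mulVec xs = r - Lt.mulVec xs := by
    have h := hLxs
    rw [← hsplit, Matrix.add_mulVec] at h
    exact eq_sub_of_add_eq h
  have hfixv : xs = B.mulVec xs + c := by
    have h1 : D⁻¹.mulVec (D.mulVec xs) = xs := by
      rw [Matrix.mulVec_mulVec, Matrix.nonsing_inv_mul D hDdet, Matrix.one_mulVec]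
    rw [hDxs] at h1
    calc xs = D⁻¹.mulVec (r - Lt.mulVec xs) := h1.symm
      _ = D⁻¹.mulVec r - (D⁻¹ * Lt).mulVec xs := by
          rw [Matrix.mulVec_sub, Matrix.mulVec_mulVec]
      _ = B.mulVec xs + c := by
          rw [hBdef, Matrix.neg_mulVec, hcdef, sub_eq_neg_add]
  have hfix : ∀ i, xs i = (∑ α, B i α * xs α) + c i := by
    intro i
    conv_lhs => rw [hfixv]
    simp [Matrix.mulVec, dotProduct]
  have hev := chaotic_converges (fun p : Fin N × Fin b => (p.1 : ℕ)) B c xs hB hfix x s u hx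
  have hevall : ∀ᶠ j in atTop, x j = xs := by
    have h2 : ∀ᶠ j in atTop, ∀ i, x j i = xs i := eventually_all.2 hev
    exact h2.mono fun j h => funext h
  exact Tendsto.congr' (hevall.mono fun j h => h.symm) tendsto_const_nhds
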